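/- arXiv:2512.22033 — 10 statements merged into one kernel-verified Lean document; each statement's English description precedes it below -/
import Mathlib

section
/- Let G be a connected graph with at least 2 vertices and let S be a self-identifying code of G. Then every vertex v of G satisfies |N(v) ∩ S| ≥ 2, where N(v) is the open neighborhood of v. -/
open SimpleGraph Set

/-- Closed neighborhood of a vertex. -/
def cNbr {V : Type*} (G : SimpleGraph V) (v : V) : Set V := insert v (G.neighborSet v)

/-- `S` is a self-identifying code of `G`. -/
def IsSID {V : Type*} (G : SimpleGraph V) (S : Set V) : Prop :=
  S.Nonempty ∧ ∀ v : V, (cNbr G v ∩ S).Nonempty ∧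
    (⋂ c ∈ cNbr G v ∩ S, cNbr G c) = {v}

/-- Minimum cardinality of a self-identifying code. -/
noncomputable def gammaSID {V : Type*} (G : SimpleGraph V) : ℕ :=
  sInf {k | ∃ S : Set V, IsSID G S ∧ S.ncard = k}

/-- Direct product of the complete graph `K_m` with the path `P_n`. -/
def KmPn (m n : ℕ) : SimpleGraph (Fin m × Fin n) where
  Adj u w := u.1 ≠ w.1 ∧ ((u.2 : ℕ) + 1 = (w.2 : ℕ) ∨ (w.2 : ℕ) + 1 = (u.2 : ℕ))
  symm := ⟨fun u w h => ⟨h.1.symm, h.2.symm⟩⟩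
  loopless := ⟨fun u h => h.1 rfl⟩

/-- Direct product of the complete graph `K_m` with the cycle `C_n`. -/
def KmCn (m n : ℕ) : SimpleGraph (Fin m × ZMod n) where
  Adj u w := u.1 ≠ w.1 ∧ (u.2 + 1 = w.2 ∨ w.2 + 1 = u.2)
  symm := ⟨fun u w h => ⟨h.1.symm, h.2.symm⟩⟩
  loopless := ⟨fun u h => h.1 rfl⟩

theorem stmt0 {V : Type*} [Fintype V] (G : SimpleGraph V) (hconn : G.Connected)
    (hcard : 2 ≤ Fintype.card V) (S : Set V) (hS : IsSID G S) (v : V) :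
    2 ≤ (G.neighborSet v ∩ S).ncard := by
  -- v has a neighbor
  obtain ⟨u, hu⟩ := Fintype.exists_ne_of_one_lt_card (by omega) v
  obtain ⟨w⟩ := hconn v u
  have hnbr : ∃ x, G.Adj v x := by
    cases w with
    | nil => exact absurd rfl hu.symm
    | cons h p => exact ⟨_, h⟩
  obtain ⟨x, hx⟩ := hnbr
  obtain ⟨hne, hint⟩ := hS.2 v
  by_contra h
  push_neg at h
  have h1 : (G.neighborSet v ∩ S).ncard ≤ 1 := by omega
  rcases (Set.ncard_le_one_iff_eq (Set.toFinite _)).mp h1 with hemp | ⟨s, hs⟩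
  · -- no neighbor of v in S
    have hsub : cNbr G v ∩ S = {v} := by
      apply Set.Subset.antisymm
      · rintro c ⟨hc, hcS⟩
        rcases hc with rfl | hc
        · rfl
        · exact absurd (Set.mem_inter hc hcS) (by simp [hemp])
      · obtain ⟨c, hc⟩ := hne
        have : c = v ∨ c ∈ G.neighborSet v := hc.1
        rcases this with rfl | hc'
        · exact Set.singleton_subset_iff.mpr hc
        · exact absurd (Set.mem_inter hc' hc.2) (by simp [hemp])
    rw [hsub] at hint
    simp only [Set.mem_singleton_iff, Set.iInter_iInter_eq_left] at hint
    have : x ∈ cNbr G v := Set.mem_insert_iff.mpr (Or.inr hx)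
    rw [hint] at this
    exact G.ne_of_adj hx this.symm
  · -- exactly one neighbor s of v in S
    have hsmem : s ∈ G.neighborSet v ∩ S := hs ▸ rfl
    have hsv : G.Adj v s := hsmem.1
    have hsS : s ∈ S := hsmem.2
    have : s ∈ ⋂ c ∈ cNbr G v ∩ S, cNbr G c := by
      apply Set.mem_iInter₂.mpr
      rintro c ⟨hc, hcS⟩
      rcases hc with rfl | hc
      · exact Set.mem_insert_iff.mpr (Or.inr hsv)
      · have : c ∈ ({s} : Set V) := hs ▸ Set.mem_inter hc hcS
        rw [Set.mem_singleton_iff] at this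
        subst this
        exact Set.mem_insert _ _
    rw [hint] at this
    exact G.ne_of_adj hsv this.symm
end

section
/- A nonempty subset S of the vertices of a graph G is a self-identifying code if and only if for every pair of distinct vertices u, v of G, the set (N[u] ∩ S) \ N[v] is nonempty. -/
open SimpleGraph Set

theorem stmt1 {V : Type*} (G : SimpleGraph V) (S : Set V) (hS : S.Nonempty) :
    IsSID G S ↔ ∀ u v : V, u ≠ v → ((cNbr G u ∩ S) \ cNbr G v).Nonempty := by
  have hmem : ∀ u v : V, u ∈ cNbr G v ↔ v ∈ cNbr G u := by
    intro u v
    simp only [cNbr, Set.mem_insert_iff, SimpleGraph.mem_neighborSet]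
    constructor
    · rintro (h | h)
      · exact Or.inl h.symm
      · exact Or.inr h.symm
    · rintro (h | h)
      · exact Or.inl h.symm
      · exact Or.inr h.symm
  constructor
  · rintro ⟨-, h⟩ u v huv
    by_contra hcon
    rw [Set.not_nonempty_iff_eq_empty, Set.diff_eq_empty] at hcon
    have hv : v ∈ ⋂ c ∈ cNbr G u ∩ S, cNbr G c := by
      refine Set.mem_biInter fun c hc => ?_
      exact (hmem v c).mpr (hcon hc)
    rw [(h u).2] at hv
    exact huv hv.symm
  · intro h
    refine ⟨hS, fun v => ?_⟩
    have hne : (cNbr G v ∩ S).Nonempty := by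
      by_cases hall : ∀ x : V, x = v
      · obtain ⟨s, hs⟩ := hS
        exact ⟨s, by rw [hall s]; exact ⟨Set.mem_insert v _, by rwa [hall s] at hs⟩⟩
      · push_neg at hall
        obtain ⟨x, hx⟩ := hall
        obtain ⟨c, hc⟩ := h v x (fun e => hx (e.symm ▸ rfl))
        exact ⟨c, hc.1⟩
    refine ⟨hne, ?_⟩
    ext x
    simp only [Set.mem_singleton_iff]
    constructor
    · intro hx
      by_contra hxv
      obtain ⟨c, hc, hcx⟩ := h v x (Ne.symm hxv)
      exact hcx ((hmem c x).mpr (Set.mem_iInter₂.mp hx c hc))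
    · rintro rfl
      exact Set.mem_biInter fun c hc => (hmem x c).mpr hc.1
end

section
/- If a graph G contains a vertex of degree one (a leaf), then G admits no self-identifying code. In particular, paths P_n admit no self-identifying code. -/
open SimpleGraph Set

lemma leaf_no_sid {V : Type*} (G : SimpleGraph V) (v u : V)
    (h : G.neighborSet v = {u}) : ¬ ∃ S : Set V, IsSID G S := by
  rintro ⟨S, -, hS⟩
  have hadj : G.Adj v u := by
    have : u ∈ G.neighborSet v := by rw [h]; rfl
    exact this
  have hu : u ∈ ⋂ c ∈ cNbr G v ∩ S, cNbr G c := by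
    refine Set.mem_iInter₂.2 fun c hc => ?_
    have hc1 : c ∈ cNbr G v := hc.1
    rcases hc1 with rfl | hc2
    · exact Or.inr hadj
    · rw [h] at hc2
      rcases hc2 with rfl
      exact Or.inl rfl
  rw [(hS v).2] at hu
  exact G.irrefl (hu ▸ hadj)

theorem stmt4 :
    (∀ (V : Type*) [Fintype V] (G : SimpleGraph V) [DecidableRel G.Adj],
        (∃ v : V, G.degree v = 1) → ¬ ∃ S : Set V, IsSID G S) ∧
      (∀ n : ℕ, 2 ≤ n → ¬ ∃ S : Set (Fin n), IsSID (SimpleGraph.pathGraph n) S) := by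
  constructor
  · intro V _ G _ ⟨v, hv⟩
    rw [← G.card_neighborFinset_eq_degree, Finset.card_eq_one] at hv
    obtain ⟨u, hu⟩ := hv
    refine leaf_no_sid G v u ?_
    ext w
    rw [SimpleGraph.mem_neighborSet, ← SimpleGraph.mem_neighborFinset, hu]
    simp
  · intro n hn
    have h0 : 0 < n := by omega
    have h1 : 1 < n := hn
    refine leaf_no_sid _ ⟨0, h0⟩ ⟨1, h1⟩ ?_
    ext w
    simp only [SimpleGraph.mem_neighborSet, SimpleGraph.pathGraph_adj,
      Set.mem_singleton_iff]
    constructor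
    · rintro (h | h)
      · exact Fin.ext (by simpa using h.symm)
      · simp at h
    · rintro rfl; left; rfl
end

section
/- For all m, n ≥ 3, the direct product graph K_m × P_n admits a self-identifying code (in fact the full vertex set is one). -/
open SimpleGraph Set

lemma exists_third {m : ℕ} (hm : 3 ≤ m) (a b : Fin m) : ∃ c : Fin m, c ≠ a ∧ c ≠ b := by
  by_contra h
  push_neg at h
  have hsub : (Finset.univ : Finset (Fin m)) ⊆ {a, b} := by
    intro x _
    rcases eq_or_ne x a with h1 | h1
    · simp [h1]
    · simp [h x h1]
  have := Finset.card_le_card hsub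
  have hcard : ({a, b} : Finset (Fin m)).card ≤ 2 := Finset.card_insert_le _ _ |>.trans (by simp)
  simp [Finset.card_univ] at this
  omega

theorem stmt5 (m n : ℕ) (hm : 3 ≤ m) (hn : 3 ≤ n) :
    IsSID (KmPn m n) (Set.univ : Set (Fin m × Fin n)) := by
  constructor
  · exact ⟨(⟨0, by omega⟩, ⟨0, by omega⟩), trivial⟩
  intro v
  constructor
  · exact ⟨v, Or.inl rfl, trivial⟩
  ext w
  simp only [Set.mem_iInter, Set.mem_inter_iff, Set.mem_univ, and_true, Set.mem_singleton_iff]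
  constructor
  · intro hw
    have hwv : w ∈ cNbr (KmPn m n) v := hw v (Or.inl rfl)
    rcases hwv with h | h
    · exact h
    · -- w adjacent to v
      exfalso
      obtain ⟨hne, hk⟩ := h
      obtain ⟨b', hb'a, hb'w⟩ := exists_third hm v.1 w.1
      have hadj : (KmPn m n).Adj v (b', w.2) := ⟨fun h => hb'a h.symm, hk⟩
      have := hw (b', w.2) (Or.inr hadj)
      rcases this with h2 | h2
      · exact hb'w (congrArg Prod.fst h2).symm
      · obtain ⟨_, hk2⟩ := h2
        simp at hk2
  · rintro rfl
    intro c hc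
    rcases (Set.mem_insert_iff.mp hc) with rfl | hadj
    · exact Or.inl rfl
    · refine Set.mem_insert_iff.mpr (Or.inr ?_)
      have hadj' : (KmPn m n).Adj w c := hadj
      exact hadj'.symm
end

section
/- Let m, n ≥ 3 and let S be a self-identifying code of K_m × P_n. Then the first column C_0 = {(v_i, 0) : 0 ≤ i ≤ m−1} and the last column C_{n−1} = {(v_i, n−1) : 0 ≤ i ≤ m−1} are both entirely contained in S. -/
open SimpleGraph Set

theorem stmt7 (m n : ℕ) (hm : 3 ≤ m) (hn : 3 ≤ n) (S : Set (Fin m × Fin n))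
    (hS : IsSID (KmPn m n) S) (i : Fin m) :
    (i, (⟨0, by omega⟩ : Fin n)) ∈ S ∧ (i, (⟨n - 1, by omega⟩ : Fin n)) ∈ S := by
  obtain ⟨-, hS2⟩ := hS
  constructor
  · by_contra hv
    obtain ⟨h1, h2⟩ := hS2 (i, (⟨0, by omega⟩ : Fin n))
    have hw : ((i, (⟨2, by omega⟩ : Fin n)) : Fin m × Fin n) ∈
        ⋂ c ∈ cNbr (KmPn m n) (i, (⟨0, by omega⟩ : Fin n)) ∩ S, cNbr (KmPn m n) c := by
      rw [Set.mem_iInter₂]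
      rintro c ⟨hc, hcS⟩
      rcases hc with rfl | hadj
      · exact absurd hcS hv
      · right
        obtain ⟨hne, hj⟩ := hadj
        refine ⟨fun h => hne (h ▸ rfl), ?_⟩
        simp only at hj ⊢
        omega
    rw [h2] at hw
    have := (Prod.mk.injEq _ _ _ _).mp hw
    have := Fin.mk.injEq _ _ _ _ ▸ this.2
    simp_all
  · by_contra hv
    obtain ⟨h1, h2⟩ := hS2 (i, (⟨n - 1, by omega⟩ : Fin n))
    have hw : ((i, (⟨n - 3, by omega⟩ : Fin n)) : Fin m × Fin n) ∈
        ⋂ c ∈ cNbr (KmPn m n) (i, (⟨n - 1, by omega⟩ : Fin n)) ∩ S, cNbr (KmPn m n) c := by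
      rw [Set.mem_iInter₂]
      rintro c ⟨hc, hcS⟩
      rcases hc with rfl | hadj
      · exact absurd hcS hv
      · right
        obtain ⟨hne, hj⟩ := hadj
        have hc2 : (c.2 : ℕ) < n := c.2.isLt
        refine ⟨fun h => hne (h ▸ rfl), ?_⟩
        simp only at hj ⊢
        omega
    rw [h2] at hw
    have := (Prod.mk.injEq _ _ _ _).mp hw
    have := Fin.mk.injEq _ _ _ _ ▸ this.2
    simp_all
    omega
end

section
/- Let m, n ≥ 3 and let S be a self-identifying code of K_m × P_n. Then |C_1 ∩ S| ≥ 3 and |C_{n−2} ∩ S| ≥ 3, where C_j denotes the j-th column {(v_i, j) : 0 ≤ i ≤ m−1}. -/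
open SimpleGraph Set

lemma two_nbrs {V : Type*} (G : SimpleGraph V) (S : Set V) (hS : IsSID G S) (v : V)
    (hw : ∃ w, G.Adj v w) :
    ∃ a b, G.Adj v a ∧ a ∈ S ∧ G.Adj v b ∧ b ∈ S ∧ a ≠ b := by
  obtain ⟨w, hvw⟩ := hw
  obtain ⟨hne, hid⟩ := hS.2 v
  have hmemc : ∀ c, c ∈ cNbr G v ↔ c = v ∨ G.Adj v c := by
    intro c; simp [cNbr, SimpleGraph.mem_neighborSet]
  have h1 : ∃ a, G.Adj v a ∧ a ∈ S := by
    by_contra h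
    push_neg at h
    have hwmem : w ∈ ⋂ c ∈ cNbr G v ∩ S, cNbr G c := by
      rw [Set.mem_iInter₂]
      intro c hc
      rcases (hmemc c).1 hc.1 with rfl | hadj
      · exact (hmemc w).2 (Or.inr hvw)
      · exact absurd hc.2 (h c hadj)
    rw [hid] at hwmem
    exact G.ne_of_adj hvw (Set.mem_singleton_iff.1 hwmem).symm
  obtain ⟨a, hva, haS⟩ := h1
  by_cases hall : ∀ b, G.Adj v b → b ∈ S → b = a
  case neg =>
    push_neg at hall
    obtain ⟨b, hvb, hbS, hba⟩ := hall
    exact ⟨a, b, hva, haS, hvb, hbS, fun h => hba h.symm⟩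
  exfalso
  have hamem : a ∈ ⋂ c ∈ cNbr G v ∩ S, cNbr G c := by
    rw [Set.mem_iInter₂]
    intro c hc
    rcases (hmemc c).1 hc.1 with rfl | hadj
    · exact (hmemc a).2 (Or.inr hva)
    · rw [hall c hadj hc.2]; simp [cNbr]
  rw [hid] at hamem
  exact G.loopless.irrefl v (by rwa [show a = v from by simpa using hamem] at hva)

lemma key (m n : ℕ) (hm : 3 ≤ m) (S : Set (Fin m × Fin n)) (hS : IsSID (KmPn m n) S)
    (j0 j1 : Fin n)
    (hadj : ∀ (i : Fin m) (w : Fin m × Fin n),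
      (KmPn m n).Adj (i, j0) w ↔ w.1 ≠ i ∧ w.2 = j1) :
    3 ≤ ({p : Fin m × Fin n | p.2 = j1} ∩ S).ncard := by
  set X := {p : Fin m × Fin n | p.2 = j1} ∩ S with hX
  have hnt : Nontrivial (Fin m) := Fin.nontrivial_iff_two_le.mpr (by omega)
  have helper : ∀ i : Fin m, ∃ a b : Fin m × Fin n,
      a ∈ X ∧ b ∈ X ∧ a ≠ b ∧ a.1 ≠ i ∧ b.1 ≠ i := by
    intro i
    obtain ⟨i', hi'⟩ := exists_ne i
    have hex : ∃ w, (KmPn m n).Adj (i, j0) w := ⟨(i', j1), (hadj i _).2 ⟨hi', rfl⟩⟩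
    obtain ⟨a, b, hva, haS, hvb, hbS, hab⟩ := two_nbrs _ S hS (i, j0) hex
    rw [hadj] at hva hvb
    exact ⟨a, b, ⟨hva.2, haS⟩, ⟨hvb.2, hbS⟩, hab, hva.1, hvb.1⟩
  obtain ⟨a, b, haX, hbX, hab, -, -⟩ := helper ⟨0, by omega⟩
  obtain ⟨c, d, hcX, hdX, hcd, hc1, hd1⟩ := helper a.1
  have : ∃ e, e ∈ X ∧ e ≠ a ∧ e ≠ b := by
    by_cases hcb : c = b
    · refine ⟨d, hdX, fun h => hd1 (by rw [h]), fun h => hcd (by rw [h, hcb])⟩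
    · exact ⟨c, hcX, fun h => hc1 (by rw [h]), hcb⟩
  obtain ⟨e, heX, hea, heb⟩ := this
  have hsub : ({a, b, e} : Set (Fin m × Fin n)) ⊆ X := by
    intro x hx
    rcases hx with rfl | rfl | rfl <;> assumption
  have h3 : ({a, b, e} : Set (Fin m × Fin n)).ncard = 3 := by
    rw [Set.ncard_eq_three]
    exact ⟨a, b, e, hab, Ne.symm hea, Ne.symm heb, rfl⟩
  calc 3 = ({a, b, e} : Set (Fin m × Fin n)).ncard := h3.symm
    _ ≤ X.ncard := Set.ncard_le_ncard hsub (Set.toFinite X)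


theorem stmt8 (m n : ℕ) (hm : 3 ≤ m) (hn : 3 ≤ n) (S : Set (Fin m × Fin n))
    (hS : IsSID (KmPn m n) S) :
    3 ≤ ({p : Fin m × Fin n | p.2 = (⟨1, by omega⟩ : Fin n)} ∩ S).ncard ∧
      3 ≤ ({p : Fin m × Fin n | p.2 = (⟨n - 2, by omega⟩ : Fin n)} ∩ S).ncard := by
  constructor
  · apply key m n hm S hS ⟨0, by omega⟩
    intro i w
    simp only [KmPn, ne_comm]
    constructor
    · rintro ⟨h1, h2⟩
      refine ⟨h1, Fin.ext ?_⟩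
      have := w.2.isLt
      simp at h2 ⊢
      omega
    · rintro ⟨h1, h2⟩
      exact ⟨h1, Or.inl (by rw [h2])⟩
  · apply key m n hm S hS ⟨n - 1, by omega⟩
    intro i w
    simp only [KmPn, ne_comm]
    constructor
    · rintro ⟨h1, h2⟩
      refine ⟨h1, Fin.ext ?_⟩
      have := w.2.isLt
      simp at h2 ⊢
      omega
    · rintro ⟨h1, h2⟩
      refine ⟨h1, Or.inr ?_⟩
      rw [h2]
      simp
      omega
end

section
/- Let m ≥ 3, n ≥ 5, let S be a self-identifying code of K_m × P_n, and suppose (v_i, j) ∉ S for some 2 ≤ j ≤ n−3. Then for every row index i' ≠ i, at least one of (v_{i'}, j−1), (v_{i'}, j+1) lies in S; consequently |N[(v_i, j)] ∩ S| ≥ m − 1. -/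
open SimpleGraph Set

theorem stmt9 (m n : ℕ) (hm : 3 ≤ m) (hn : 5 ≤ n) (S : Set (Fin m × Fin n))
    (hS : IsSID (KmPn m n) S) (i : Fin m) (j : ℕ) (hj1 : 2 ≤ j) (hj2 : j ≤ n - 3)
    (hv : (i, (⟨j, by omega⟩ : Fin n)) ∉ S) :
    (∀ i' : Fin m, i' ≠ i →
        (i', (⟨j - 1, by omega⟩ : Fin n)) ∈ S ∨ (i', (⟨j + 1, by omega⟩ : Fin n)) ∈ S) ∧
      m - 1 ≤ (cNbr (KmPn m n) (i, (⟨j, by omega⟩ : Fin n)) ∩ S).ncard := by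
  classical
  set v : Fin m × Fin n := (i, (⟨j, by omega⟩ : Fin n)) with hvdef
  have hmem : ∀ c : Fin m × Fin n, c ∈ cNbr (KmPn m n) v ∩ S →
      c.1 ≠ i ∧ ((c.2 : ℕ) = j - 1 ∨ (c.2 : ℕ) = j + 1) ∧ c ∈ S := by
    intro c hc
    obtain ⟨hcN, hcS⟩ := hc
    rcases hcN with hcv | hadj
    · exact absurd (hcv ▸ hcS) hv
    · simp only [SimpleGraph.mem_neighborSet, KmPn] at hadj
      obtain ⟨h1, h2⟩ := hadj
      refine ⟨fun h => h1 (h.symm), ?_, hcS⟩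
      simp only [hvdef] at h2
      omega
  have part1 : ∀ i' : Fin m, i' ≠ i →
      (i', (⟨j - 1, by omega⟩ : Fin n)) ∈ S ∨ (i', (⟨j + 1, by omega⟩ : Fin n)) ∈ S := by
    intro i' hne
    by_contra h
    push_neg at h
    obtain ⟨h1, h2⟩ := h
    have key := (hS.2 v).2
    have hin : (i', (⟨j, by omega⟩ : Fin n)) ∈ ⋂ c ∈ cNbr (KmPn m n) v ∩ S, cNbr (KmPn m n) c := by
      rw [Set.mem_iInter₂]
      intro c hc
      obtain ⟨hc1, hc2, hc3⟩ := hmem c hc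
      have hci' : c.1 ≠ i' := by
        intro hci
        rcases hc2 with hc2 | hc2
        · apply h1
          have : c = (i', (⟨j - 1, by omega⟩ : Fin n)) := by
            apply Prod.ext hci (Fin.ext ?_); exact hc2
          exact this ▸ hc3
        · apply h2
          have : c = (i', (⟨j + 1, by omega⟩ : Fin n)) := by
            apply Prod.ext hci (Fin.ext ?_); exact hc2
          exact this ▸ hc3
      right
      simp only [SimpleGraph.mem_neighborSet, KmPn]
      exact ⟨hci', by rcases hc2 with hc2 | hc2 <;> simp [hc2] <;> omega⟩
    rw [key, Set.mem_singleton_iff, hvdef, Prod.mk.injEq] at hin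
    exact hne hin.1
  refine ⟨part1, ?_⟩
  -- injection from {i}ᶜ into cNbr v ∩ S
  set T := cNbr (KmPn m n) v ∩ S with hT
  set f : Fin m → Fin m × Fin n := fun k =>
    if (k, (⟨j - 1, by omega⟩ : Fin n)) ∈ S then (k, (⟨j - 1, by omega⟩ : Fin n))
    else (k, (⟨j + 1, by omega⟩ : Fin n)) with hf
  have hmaps : Set.MapsTo f ({i}ᶜ : Set (Fin m)) T := by
    intro k hk
    simp only [Set.mem_compl_iff, Set.mem_singleton_iff] at hk
    have hadj : ∀ (x : Fin n), (x : ℕ) + 1 = j ∨ j + 1 = (x : ℕ) →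
        (k, x) ∈ cNbr (KmPn m n) v := by
      intro x hx
      right
      simp only [SimpleGraph.mem_neighborSet, KmPn]
      exact ⟨fun h => hk h.symm, by rcases hx with hx | hx <;> simp [← hx, hvdef] <;> omega⟩
    rcases part1 k hk with h | h
    · simp only [hf, if_pos h]
      exact ⟨hadj _ (by left; simp; omega), h⟩
    · by_cases h' : (k, (⟨j - 1, by omega⟩ : Fin n)) ∈ S
      · simp only [hf, if_pos h']
        exact ⟨hadj _ (by left; simp; omega), h'⟩
      · simp only [hf, if_neg h']
        exact ⟨hadj _ (by right; simp), h⟩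
  have hinj : Set.InjOn f ({i}ᶜ : Set (Fin m)) := by
    intro a _ b _ hab
    have : (f a).1 = (f b).1 := by rw [hab]
    simpa [hf, apply_ite Prod.fst] using this
  have hle : (({i}ᶜ : Set (Fin m))).ncard ≤ T.ncard := by
    have h1 : (f '' ({i}ᶜ : Set (Fin m))).ncard ≤ T.ncard :=
      Set.ncard_le_ncard (Set.mapsTo_iff_image_subset.mp hmaps) (Set.toFinite T)
    rwa [Set.ncard_image_of_injOn hinj] at h1
  have hcompl : (({i}ᶜ : Set (Fin m))).ncard = m - 1 := by
    have h2 := Set.ncard_add_ncard_compl ({i} : Set (Fin m))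
    simp only [Set.ncard_singleton, Nat.card_eq_fintype_card, Fintype.card_fin] at h2
    omega
  omega
end

section
/- Let m ≥ 3, n ≥ 7, let S be a self-identifying code of K_m × P_n, and suppose some internal column C_j with 3 ≤ j ≤ n−4 satisfies C_j ∩ S = ∅. Then both adjacent columns are entirely contained in S: C_{j−1} ∪ C_{j+1} ⊆ S. -/
open SimpleGraph Set

theorem stmt11 (m n : ℕ) (hm : 3 ≤ m) (hn : 7 ≤ n) (S : Set (Fin m × Fin n))
    (hS : IsSID (KmPn m n) S) (j : ℕ) (hj1 : 3 ≤ j) (hj2 : j ≤ n - 4)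
    (hempty : {p : Fin m × Fin n | p.2 = (⟨j, by omega⟩ : Fin n)} ∩ S = ∅) :
    {p : Fin m × Fin n | p.2 = (⟨j - 1, by omega⟩ : Fin n)} ∪
        {p : Fin m × Fin n | p.2 = (⟨j + 1, by omega⟩ : Fin n)} ⊆ S := by
  have hn' : 7 ≤ n := hn
  have hcolj : ∀ q : Fin m × Fin n, (q.2 : ℕ) = j → q ∉ S := by
    intro q hq hqS
    have hmem : q ∈ ({p : Fin m × Fin n | p.2 = (⟨j, by omega⟩ : Fin n)} ∩ S) :=
      ⟨by simp only [Set.mem_setOf_eq]; exact Fin.ext hq, hqS⟩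
    rw [hempty] at hmem
    exact hmem
  intro p hp
  by_contra hpS
  obtain ⟨-, hint⟩ := hS.2 p
  -- the column of p, as a natural number: j-1 or j+1
  have hpcol : (p.2 : ℕ) = j - 1 ∨ (p.2 : ℕ) = j + 1 := by
    rcases hp with h | h <;> [left; right] <;>
      simp only [Set.mem_setOf_eq] at h <;> rw [h]
  -- choose the "far" column: j-3 or j+3
  obtain ⟨k, hk_lt, hk_adj, hk_ne⟩ :
      ∃ k : ℕ, k < n ∧ (∀ l : ℕ, l < n → ((p.2 : ℕ) + 1 = l ∨ l + 1 = (p.2 : ℕ)) → l ≠ j →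
        (k + 1 = l ∨ l + 1 = k)) ∧ k ≠ (p.2 : ℕ) := by
    rcases hpcol with h | h
    · exact ⟨j - 3, by omega, fun l _ hl hlj => by omega, by omega⟩
    · exact ⟨j + 3, by omega, fun l _ hl hlj => by omega, by omega⟩
  set q : Fin m × Fin n := (p.1, ⟨k, hk_lt⟩) with hq
  have hqmem : q ∈ ⋂ c ∈ cNbr (KmPn m n) p ∩ S, cNbr (KmPn m n) c := by
    rw [Set.mem_iInter₂]
    rintro c ⟨hc1, hc2⟩
    rcases (Set.mem_insert_iff.mp hc1) with rfl | hadj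
    · exact absurd hc2 hpS
    · obtain ⟨hne1, hcol⟩ := (SimpleGraph.mem_neighborSet _ _ _).mp hadj
      have hcj : (c.2 : ℕ) ≠ j := fun h => hcolj c h hc2
      have hadj' : (KmPn m n).Adj c q := by
        refine ⟨fun h => hne1 (by simp [hq] at h; exact h.symm), ?_⟩
        have := hk_adj (c.2 : ℕ) c.2.isLt hcol hcj
        simpa [hq] using this.symm
      exact Set.mem_insert_iff.mpr (Or.inr ((SimpleGraph.mem_neighborSet _ _ _).mpr hadj'))
  rw [hint, Set.mem_singleton_iff] at hqmem
  exact hk_ne (by rw [← hqmem])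
end

section
/- For integers m ≥ 3 and n ≥ 7, the minimum size of a self-identifying code of K_m × P_n satisfies γ^SID(K_m × P_n) ≤ ⌈(n+1)/3⌉·(m+3) + m. -/
open SimpleGraph Set

lemma mem_cNbr_iff {m n : ℕ} {v u : Fin m × Fin n} :
    u ∈ cNbr (KmPn m n) v ↔ u = v ∨ (v.1 ≠ u.1 ∧ ((v.2:ℕ)+1 = (u.2:ℕ) ∨ (u.2:ℕ)+1 = (v.2:ℕ))) := by
  simp only [cNbr, Set.mem_insert_iff, SimpleGraph.mem_neighborSet]
  rfl

lemma cNbr_self {m n : ℕ} (v : Fin m × Fin n) : v ∈ cNbr (KmPn m n) v := by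
  simp [cNbr]

lemma cNbr_comm {m n : ℕ} {v u : Fin m × Fin n} (h : u ∈ cNbr (KmPn m n) v) :
    v ∈ cNbr (KmPn m n) u := by
  rcases mem_cNbr_iff.mp h with h | h
  · rw [h]; exact cNbr_self v
  · exact mem_cNbr_iff.mpr (Or.inr ⟨h.1.symm, h.2.symm⟩)

lemma exists_two_small {m : ℕ} (hm : 3 ≤ m) (a : Fin m) :
    ∃ x y : Fin m, x ≠ y ∧ x ≠ a ∧ y ≠ a ∧ (x:ℕ) < 3 ∧ (y:ℕ) < 3 := by
  by_cases h0 : (a:ℕ) = 0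
  · exact ⟨⟨1, by omega⟩, ⟨2, by omega⟩, by simp [Fin.ext_iff], by simp [Fin.ext_iff]; omega,
      by simp [Fin.ext_iff]; omega, by simp, by simp⟩
  · by_cases h1 : (a:ℕ) = 1
    · exact ⟨⟨0, by omega⟩, ⟨2, by omega⟩, by simp [Fin.ext_iff], by simp [Fin.ext_iff]; omega,
        by simp [Fin.ext_iff]; omega, by simp, by simp⟩
    · exact ⟨⟨0, by omega⟩, ⟨1, by omega⟩, by simp [Fin.ext_iff], by simp [Fin.ext_iff]; omega,
        by simp [Fin.ext_iff]; omega, by simp, by simp⟩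

def Scode (m n : ℕ) : Set (Fin m × Fin n) :=
  {p | ((p.2:ℕ) % 3 = 0 ∨ n - 2 ≤ (p.2:ℕ))
     ∨ ((p.2:ℕ) = 1 ∧ (p.1:ℕ) < 3)
     ∨ ((p.2:ℕ) % 3 = 1 ∧ 2 ≤ (p.2:ℕ) ∧ (p.2:ℕ) ≤ n - 3 ∧ (p.1:ℕ) = ((p.2:ℕ)/3) % 2)
     ∨ ((p.2:ℕ) % 3 = 2 ∧ (p.2:ℕ) ≤ n - 3 ∧ ((p.1:ℕ) = ((p.2:ℕ)/3) % 2 ∨ (p.1:ℕ) = 2))}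

lemma mem_Scode {m n : ℕ} {p : Fin m × Fin n} :
    p ∈ Scode m n ↔
    (((p.2:ℕ) % 3 = 0 ∨ n - 2 ≤ (p.2:ℕ))
     ∨ ((p.2:ℕ) = 1 ∧ (p.1:ℕ) < 3)
     ∨ ((p.2:ℕ) % 3 = 1 ∧ 2 ≤ (p.2:ℕ) ∧ (p.2:ℕ) ≤ n - 3 ∧ (p.1:ℕ) = ((p.2:ℕ)/3) % 2)
     ∨ ((p.2:ℕ) % 3 = 2 ∧ (p.2:ℕ) ≤ n - 3 ∧ ((p.1:ℕ) = ((p.2:ℕ)/3) % 2 ∨ (p.1:ℕ) = 2))) :=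
  Iff.rfl

/-- If the column `j'` adjacent to `v`'s column is fully contained in the code, then any `u`
in the intersection of closed neighborhoods of codewords near `v` has row `v.1` and column
adjacent to `j'`. -/
lemma patternA {m n : ℕ} (hm : 3 ≤ m) {v u : Fin m × Fin n} {j' : Fin n}
    (hcol : ((v.2:ℕ)+1 = (j':ℕ) ∨ (j':ℕ)+1 = (v.2:ℕ)))
    (hS : ∀ k : Fin m, k ≠ v.1 → (k, j') ∈ Scode m n)
    (hu : ∀ c ∈ cNbr (KmPn m n) v ∩ Scode m n, u ∈ cNbr (KmPn m n) c) :
    u.1 = v.1 ∧ ((j':ℕ)+1 = (u.2:ℕ) ∨ (u.2:ℕ)+1 = (j':ℕ)) := by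
  have hmem : ∀ k : Fin m, k ≠ v.1 → u ∈ cNbr (KmPn m n) (k, j') := by
    intro k hk
    exact hu _ ⟨mem_cNbr_iff.mpr (Or.inr ⟨hk.symm, hcol⟩), hS k hk⟩
  -- u is not in column j'
  have hucol : (u.2:ℕ) ≠ (j':ℕ) := by
    intro heq
    obtain ⟨k', hk'v, hk'u⟩ := exists_third hm v.1 u.1
    rcases mem_cNbr_iff.mp (hmem k' hk'v) with h | h
    · exact hk'u.symm (congrArg Prod.fst h)
    · dsimp only at h; omega
  obtain ⟨k0, hk0v, _⟩ := exists_third hm v.1 v.1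
  have hcols : ((j':ℕ)+1 = (u.2:ℕ) ∨ (u.2:ℕ)+1 = (j':ℕ)) := by
    rcases mem_cNbr_iff.mp (hmem k0 hk0v) with h | h
    · exact absurd (congrArg (fun p => ((p.2 : Fin n) : ℕ)) h) hucol
    · exact h.2
  refine ⟨?_, hcols⟩
  by_contra hne
  rcases mem_cNbr_iff.mp (hmem u.1 (fun h => hne (by rw [h]))) with h | h
  · exact hucol (congrArg (fun p => ((p.2 : Fin n) : ℕ)) h)
  · exact h.1 rfl

lemma exists_two_small' (a : ℕ) : ∃ x y : ℕ, x < 3 ∧ y < 3 ∧ x ≠ y ∧ x ≠ a ∧ y ≠ a := by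
  by_cases h0 : a = 0
  · exact ⟨1, 2, by omega, by omega, by omega, by omega, by omega⟩
  · by_cases h1 : a = 1
    · exact ⟨0, 2, by omega, by omega, by omega, by omega, by omega⟩
    · exact ⟨0, 1, by omega, by omega, by omega, by omega, by omega⟩

/-- Apply the intersection hypothesis to an explicitly constructed codeword neighbor. -/
lemma hit {m n : ℕ} {v u : Fin m × Fin n}
    (hu : ∀ c ∈ cNbr (KmPn m n) v ∩ Scode m n, u ∈ cNbr (KmPn m n) c)
    {kv jv : ℕ} (hk : kv < m) (hj : jv < n)
    (hrow : (v.1:ℕ) ≠ kv)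
    (hcol : (v.2:ℕ)+1 = jv ∨ jv+1 = (v.2:ℕ))
    (hS : (jv % 3 = 0 ∨ n - 2 ≤ jv) ∨ (jv = 1 ∧ kv < 3)
        ∨ (jv % 3 = 1 ∧ 2 ≤ jv ∧ jv ≤ n - 3 ∧ kv = (jv/3) % 2)
        ∨ (jv % 3 = 2 ∧ jv ≤ n - 3 ∧ (kv = (jv/3) % 2 ∨ kv = 2))) :
    ((u.1:ℕ) = kv ∧ (u.2:ℕ) = jv) ∨ ((u.1:ℕ) ≠ kv ∧ (jv+1 = (u.2:ℕ) ∨ (u.2:ℕ)+1 = jv)) := by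
  have hmem : ((⟨kv, hk⟩ : Fin m), (⟨jv, hj⟩ : Fin n)) ∈ cNbr (KmPn m n) v ∩ Scode m n := by
    refine ⟨mem_cNbr_iff.mpr (Or.inr ⟨fun h => hrow (congrArg Fin.val h), hcol⟩), ?_⟩
    exact mem_Scode.mpr hS
  rcases mem_cNbr_iff.mp (hu _ hmem) with h | h
  · exact Or.inl ⟨congrArg (fun p => ((p.1 : Fin m) : ℕ)) h, congrArg (fun p => ((p.2 : Fin n) : ℕ)) h⟩
  · exact Or.inr ⟨fun heq => h.1 (Fin.ext heq.symm), h.2⟩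

lemma hitSelf {m n : ℕ} {v u : Fin m × Fin n}
    (hu : ∀ c ∈ cNbr (KmPn m n) v ∩ Scode m n, u ∈ cNbr (KmPn m n) c)
    (hvS : v ∈ Scode m n) :
    u = v ∨ ((u.1:ℕ) ≠ (v.1:ℕ) ∧ ((v.2:ℕ)+1 = (u.2:ℕ) ∨ (u.2:ℕ)+1 = (v.2:ℕ))) := by
  rcases mem_cNbr_iff.mp (hu v ⟨cNbr_self v, hvS⟩) with h | h
  · exact Or.inl h
  · exact Or.inr ⟨fun heq => h.1 (Fin.ext heq.symm), h.2⟩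

lemma patternA' {m n : ℕ} (hm : 3 ≤ m) {v u : Fin m × Fin n}
    (hu : ∀ c ∈ cNbr (KmPn m n) v ∩ Scode m n, u ∈ cNbr (KmPn m n) c)
    {jv : ℕ} (hj : jv < n)
    (hcol : (v.2:ℕ)+1 = jv ∨ jv+1 = (v.2:ℕ))
    (hfull : jv % 3 = 0 ∨ n - 2 ≤ jv) :
    (u.1:ℕ) = (v.1:ℕ) ∧ (jv+1 = (u.2:ℕ) ∨ (u.2:ℕ)+1 = jv) := by
  have h := patternA (j' := (⟨jv, hj⟩ : Fin n)) hm hcol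
    (fun k _ => mem_Scode.mpr (Or.inl hfull)) hu
  exact ⟨congrArg Fin.val h.1, h.2⟩

lemma Scode_nonempty_nbr {m n : ℕ} (hm : 3 ≤ m) (hn : 7 ≤ n) (v : Fin m × Fin n) :
    (cNbr (KmPn m n) v ∩ Scode m n).Nonempty := by
  by_cases hvS : v ∈ Scode m n
  · exact ⟨v, cNbr_self v, hvS⟩
  · have hJlt : (v.2:ℕ) < n := v.2.isLt
    have h1 : (v.2:ℕ) % 3 ≠ 0 := fun h => hvS (mem_Scode.mpr (Or.inl (Or.inl h)))
    have h2 : ¬ (n - 2 ≤ (v.2:ℕ)) := fun h => hvS (mem_Scode.mpr (Or.inl (Or.inr h)))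
    obtain ⟨k, hk1, -⟩ := exists_third hm v.1 v.1
    by_cases h3 : (v.2:ℕ) % 3 = 1
    · refine ⟨(k, ⟨(v.2:ℕ) - 1, by omega⟩), mem_cNbr_iff.mpr (Or.inr ⟨hk1.symm, by
        right; show (((v.2:ℕ) - 1 : ℕ)) + 1 = (v.2:ℕ); omega⟩), mem_Scode.mpr (by
        left; left; show ((v.2:ℕ) - 1) % 3 = 0; omega)⟩
    · refine ⟨(k, ⟨(v.2:ℕ) + 1, by omega⟩), mem_cNbr_iff.mpr (Or.inr ⟨hk1.symm, by
        left; show (v.2:ℕ) + 1 = ((v.2:ℕ) + 1 : ℕ); rfl⟩), mem_Scode.mpr (by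
        left; left; show ((v.2:ℕ) + 1) % 3 = 0; omega)⟩

lemma isSID_Scode {m n : ℕ} (hm : 3 ≤ m) (hn : 7 ≤ n) : IsSID (KmPn m n) (Scode m n) := by
  refine ⟨⟨(⟨0, by omega⟩, ⟨0, by omega⟩), mem_Scode.mpr (Or.inl (Or.inl (by simp)))⟩, ?_⟩
  intro v
  refine ⟨Scode_nonempty_nbr hm hn v, ?_⟩
  apply Set.eq_singleton_iff_unique_mem.mpr
  refine ⟨Set.mem_iInter₂.mpr (fun c hc => cNbr_comm hc.1), ?_⟩
  intro u hu
  rw [Set.mem_iInter₂] at hu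
  have hJlt : (v.2:ℕ) < n := v.2.isLt
  have hUlt : (u.2:ℕ) < n := u.2.isLt
  set J := (v.2:ℕ) with hJdef
  set U := (u.2:ℕ) with hUdef
  set V1 := (v.1:ℕ) with hV1def
  set U1 := (u.1:ℕ) with hU1def
  by_cases hJ0 : J = 0
  · -- column 0 : full column, use v and two small-row singles in column 1
    have hvS : v ∈ Scode m n := mem_Scode.mpr (Or.inl (Or.inl (by omega)))
    rcases hitSelf hu hvS with h | h
    · exact h
    · exfalso
      obtain ⟨x, y, hx3, hy3, hxy, hxv, hyv⟩ := exists_two_small' V1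
      have hx := hit hu (show x < m by omega) (show 1 < n by omega)
        (by omega) (by omega) (by omega)
      have hy := hit hu (show y < m by omega) (show 1 < n by omega)
        (by omega) (by omega) (by omega)
      omega
  · by_cases hJ1 : J = 1
    · -- column 1 : full column 0 on the left pins u completely
      have h := patternA' hm hu (show 0 < n by omega) (by omega) (by omega)
      exact Prod.ext (Fin.ext h.1) (Fin.ext (by omega))
    · by_cases hJn1 : J = n - 1
      · -- last column : full column n-2 on the left, and v itself
        have h := patternA' hm hu (show n - 2 < n by omega) (by omega) (by omega)
        have hvS : v ∈ Scode m n := mem_Scode.mpr (Or.inl (Or.inr (by omega)))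
        rcases hitSelf hu hvS with h' | h'
        · exact h'
        · exfalso; omega
      · by_cases hJn2 : J = n - 2
        · -- column n-2 : full column n-1 on the right pins u completely
          have h := patternA' hm hu (show n - 1 < n by omega) (by omega) (by omega)
          exact Prod.ext (Fin.ext h.1) (Fin.ext (by omega))
        · -- now 2 ≤ J ≤ n-3
          have hJle : 2 ≤ J ∧ J ≤ n - 3 := by omega
          have h3 : J % 3 = 0 ∨ J % 3 = 1 ∨ J % 3 = 2 := by omega
          rcases h3 with h30 | h31 | h32
          · -- code column, 3 ≤ J ≤ n-3
            have hvS : v ∈ Scode m n := mem_Scode.mpr (Or.inl (Or.inl h30))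
            rcases hitSelf hu hvS with h | h
            · exact h
            · exfalso
              by_cases hfull : n - 2 ≤ J + 1
              · have hA := patternA' hm hu (show J + 1 < n by omega) (by omega) (by omega)
                omega
              · by_cases hi : V1 = (J/3) % 2
                · -- two singles in column J-1, rows ((J-1)/3)%2 and 2
                  have h1 := hit hu (show ((J-1)/3) % 2 < m by omega) (show J - 1 < n by omega)
                    (by omega) (by omega) (by omega)
                  have h2 := hit hu (show 2 < m by omega) (show J - 1 < n by omega)
                    (by omega) (by omega) (by omega)
                  omega
                · -- singles on both sides
                  have hR := hit hu (show ((J+1)/3) % 2 < m by omega) (show J + 1 < n by omega)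
                    (by omega) (by omega) (by omega)
                  have hL : ∃ kv, kv < m ∧ kv ≠ V1 ∧ (kv = ((J-1)/3) % 2 ∨ kv = 2) := by
                    by_cases h2 : V1 = 2
                    · exact ⟨((J-1)/3) % 2, by omega, by omega, Or.inl rfl⟩
                    · exact ⟨2, by omega, by omega, Or.inr rfl⟩
                  obtain ⟨kv, hkv, hkvne, hkvB⟩ := hL
                  have h1 := hit hu hkv (show J - 1 < n by omega)
                    (by omega) (by omega) (by omega)
                  omega
          · -- column ≡ 1 mod 3 (so 4 ≤ J): full column J-1 on the left
            have h := patternA' hm hu (show J - 1 < n by omega) (by omega) (by omega)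
            -- exclude (i, J-2) using a codeword in column J+1 with row ≠ v.1
            have hk : ∃ kv, kv < m ∧ kv ≠ V1 ∧ (kv = ((J+1)/3) % 2 ∨ kv = 2) := by
              by_cases h2 : V1 = 2
              · exact ⟨((J+1)/3) % 2, by omega, by omega, Or.inl rfl⟩
              · exact ⟨2, by omega, by omega, Or.inr rfl⟩
            obtain ⟨kv, hkv, hkvne, hkvB⟩ := hk
            have h1 := hit hu hkv (show J + 1 < n by omega) (by omega) (by omega) (by omega)
            exact Prod.ext (Fin.ext (by omega)) (Fin.ext (by omega))
          · -- column ≡ 2 mod 3 : full column J+1 on the right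
            have h := patternA' hm hu (show J + 1 < n by omega) (by omega) (by omega)
            by_cases hB : V1 = (J/3) % 2 ∨ V1 = 2
            · have hvS : v ∈ Scode m n := mem_Scode.mpr (Or.inr (Or.inr (Or.inr ⟨h32, by omega, by omega⟩)))
              rcases hitSelf hu hvS with h' | h'
              · exact h'
              · exfalso; omega
            · push_neg at hB
              have h1 := hit hu (show ((J-1)/3) % 2 < m by omega) (show J - 1 < n by omega)
                (by omega) (by omega) (by omega)
              exact Prod.ext (Fin.ext (by omega)) (Fin.ext (by omega))

open Finset in
lemma Scode_ncard_le {m n : ℕ} (hm : 3 ≤ m) (hn : 7 ≤ n) :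
    (Scode m n).ncard ≤ (n + 1 + 2) / 3 * (m + 3) + m := by
  classical
  have hrep : Scode m n = ↑(Finset.univ.filter (fun p : Fin m × Fin n =>
      ((p.2:ℕ) % 3 = 0 ∨ n - 2 ≤ (p.2:ℕ))
     ∨ ((p.2:ℕ) = 1 ∧ (p.1:ℕ) < 3)
     ∨ ((p.2:ℕ) % 3 = 1 ∧ 2 ≤ (p.2:ℕ) ∧ (p.2:ℕ) ≤ n - 3 ∧ (p.1:ℕ) = ((p.2:ℕ)/3) % 2)
     ∨ ((p.2:ℕ) % 3 = 2 ∧ (p.2:ℕ) ≤ n - 3 ∧ ((p.1:ℕ) = ((p.2:ℕ)/3) % 2 ∨ (p.1:ℕ) = 2)))) := by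
    ext p; simp [Scode]
  rw [hrep, Set.ncard_coe_finset]
  -- split into five pieces
  set F1a := Finset.univ.filter (fun p : Fin m × Fin n => (p.2:ℕ) % 3 = 0 ∧ (p.2:ℕ) ≤ n - 3) with hF1a
  set F1b := Finset.univ.filter (fun p : Fin m × Fin n => n - 2 ≤ (p.2:ℕ)) with hF1b
  set F2 := Finset.univ.filter (fun p : Fin m × Fin n => (p.2:ℕ) = 1 ∧ (p.1:ℕ) < 3) with hF2
  set F3 := Finset.univ.filter (fun p : Fin m × Fin n =>
      (p.2:ℕ) % 3 = 1 ∧ 2 ≤ (p.2:ℕ) ∧ (p.2:ℕ) ≤ n - 3 ∧ (p.1:ℕ) = ((p.2:ℕ)/3) % 2) with hF3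
  set F4 := Finset.univ.filter (fun p : Fin m × Fin n =>
      (p.2:ℕ) % 3 = 2 ∧ (p.2:ℕ) ≤ n - 3 ∧ ((p.1:ℕ) = ((p.2:ℕ)/3) % 2 ∨ (p.1:ℕ) = 2)) with hF4
  have hsub : Finset.univ.filter (fun p : Fin m × Fin n =>
      ((p.2:ℕ) % 3 = 0 ∨ n - 2 ≤ (p.2:ℕ))
     ∨ ((p.2:ℕ) = 1 ∧ (p.1:ℕ) < 3)
     ∨ ((p.2:ℕ) % 3 = 1 ∧ 2 ≤ (p.2:ℕ) ∧ (p.2:ℕ) ≤ n - 3 ∧ (p.1:ℕ) = ((p.2:ℕ)/3) % 2)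
     ∨ ((p.2:ℕ) % 3 = 2 ∧ (p.2:ℕ) ≤ n - 3 ∧ ((p.1:ℕ) = ((p.2:ℕ)/3) % 2 ∨ (p.1:ℕ) = 2)))
      ⊆ F1a ∪ F1b ∪ F2 ∪ F3 ∪ F4 := by
    intro p hp
    simp only [Finset.mem_filter, Finset.mem_union, Finset.mem_univ, true_and,
      hF1a, hF1b, hF2, hF3, hF4] at hp ⊢
    have hplt : (p.2:ℕ) < n := p.2.isLt
    omega
  have h1a : F1a.card ≤ m * (n / 3) := by
    apply Finset.card_le_card_of_injOn (fun p => (p.1, (p.2:ℕ)/3))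
      (t := Finset.univ ×ˢ Finset.range (n / 3)) ?_ ?_ |>.trans
    · simp [Finset.card_product]
    · intro p hp
      simp only [hF1a, Finset.mem_filter, Finset.mem_coe] at hp
      simp only [Finset.mem_coe, Finset.mem_product, Finset.mem_univ, Finset.mem_range, true_and]
      omega
    · intro p hp q hq heq
      simp only [hF1a, Finset.mem_filter, Finset.mem_coe] at hp hq
      simp only [Prod.mk.injEq] at heq
      obtain ⟨h1, h2⟩ := heq
      exact Prod.ext h1 (Fin.ext (by omega))
  have h1b : F1b.card ≤ m * 2 := by
    apply Finset.card_le_card_of_injOn (fun p => (p.1, (p.2:ℕ) - (n-2)))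
      (t := Finset.univ ×ˢ Finset.range 2) ?_ ?_ |>.trans
    · simp [Finset.card_product]
    · intro p hp
      simp only [hF1b, Finset.mem_filter, Finset.mem_coe] at hp
      simp only [Finset.mem_coe, Finset.mem_product, Finset.mem_univ, Finset.mem_range, true_and]
      have := p.2.isLt; omega
    · intro p hp q hq heq
      simp only [hF1b, Finset.mem_filter, Finset.mem_coe] at hp hq
      simp only [Prod.mk.injEq] at heq
      obtain ⟨h1, h2⟩ := heq
      have := p.2.isLt; have := q.2.isLt
      exact Prod.ext h1 (Fin.ext (by omega))
  have h2c : F2.card ≤ 3 := by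
    apply Finset.card_le_card_of_injOn (fun p => (p.1:ℕ)) (t := Finset.range 3) ?_ ?_ |>.trans
    · simp
    · intro p hp
      simp only [hF2, Finset.mem_filter, Finset.mem_coe] at hp
      simp only [Finset.mem_coe, Finset.mem_range]
      omega
    · intro p hp q hq heq
      simp only [hF2, Finset.mem_filter, Finset.mem_coe] at hp hq
      simp only at heq
      exact Prod.ext (Fin.ext heq) (Fin.ext (by omega))
  have h3c : F3.card ≤ n / 3 := by
    apply Finset.card_le_card_of_injOn (fun p => (p.2:ℕ)/3) (t := Finset.range (n/3)) ?_ ?_ |>.trans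
    · simp
    · intro p hp
      simp only [hF3, Finset.mem_filter, Finset.mem_coe] at hp
      simp only [Finset.mem_coe, Finset.mem_range]
      omega
    · intro p hp q hq heq
      simp only [hF3, Finset.mem_filter, Finset.mem_coe] at hp hq
      simp only at heq
      have h2 : (p.2:ℕ) = (q.2:ℕ) := by omega
      exact Prod.ext (Fin.ext (by omega)) (Fin.ext h2)
  have h4c : F4.card ≤ n / 3 * 2 := by
    apply Finset.card_le_card_of_injOn
      (fun p => ((p.2:ℕ)/3, if (p.1:ℕ) = 2 then 1 else 0))
      (t := Finset.range (n/3) ×ˢ Finset.range 2) ?_ ?_ |>.trans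
    · simp [Finset.card_product]
    · intro p hp
      simp only [hF4, Finset.mem_filter, Finset.mem_coe] at hp
      simp only [Finset.mem_coe, Finset.mem_product, Finset.mem_range]
      constructor
      · omega
      · split <;> omega
    · intro p hp q hq heq
      simp only [hF4, Finset.mem_filter, Finset.mem_coe] at hp hq
      simp only [Prod.mk.injEq] at heq
      obtain ⟨h1, h2⟩ := heq
      have hJ : (p.2:ℕ) = (q.2:ℕ) := by omega
      have hI : (p.1:ℕ) = (q.1:ℕ) := by
        by_cases hp2 : (p.1:ℕ) = 2
        · by_cases hq2 : (q.1:ℕ) = 2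
          · omega
          · rw [if_pos hp2, if_neg hq2] at h2; omega
        · by_cases hq2 : (q.1:ℕ) = 2
          · rw [if_neg hp2, if_pos hq2] at h2; omega
          · rcases hp.2.2.2 with h | h <;> rcases hq.2.2.2 with h' | h' <;> omega
      exact Prod.ext (Fin.ext hI) (Fin.ext hJ)
  calc (Finset.univ.filter _).card
      ≤ (F1a ∪ F1b ∪ F2 ∪ F3 ∪ F4).card := Finset.card_le_card hsub
    _ ≤ F1a.card + F1b.card + F2.card + F3.card + F4.card := by
        refine le_trans (Finset.card_union_le _ _) ?_
        refine add_le_add_left (le_trans (Finset.card_union_le _ _) ?_) _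
        refine add_le_add_left (le_trans (Finset.card_union_le _ _) ?_) _
        exact add_le_add_left (Finset.card_union_le _ _) _
    _ ≤ m * (n/3) + m * 2 + 3 + n/3 + n/3 * 2 := by
        omega
    _ = (n/3 + 1) * (m + 3) + m := by ring
    _ = (n + 1 + 2) / 3 * (m + 3) + m := by
        have : (n + 1 + 2) / 3 = n / 3 + 1 := by omega
        rw [this]

theorem stmt14 (m n : ℕ) (hm : 3 ≤ m) (hn : 7 ≤ n) :
    gammaSID (KmPn m n) ≤ (n + 1 + 2) / 3 * (m + 3) + m := by
  have h1 : IsSID (KmPn m n) (Scode m n) := isSID_Scode hm hn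
  have h2 := Scode_ncard_le (m := m) (n := n) hm hn
  exact le_trans (Nat.sInf_le ⟨Scode m n, h1, rfl⟩) h2
end

section
/- For all m, n ≥ 3 and any self-identifying code S of K_m × C_n and any column index j (mod n), the three consecutive columns satisfy |(C_{j−1} ∪ C_j ∪ C_{j+1}) ∩ S| ≥ m + 2. -/
open SimpleGraph Set

/-! ### Auxiliary lemmas -/

lemma mem_cNbr {V : Type*} {G : SimpleGraph V} {v w : V} :
    w ∈ cNbr G v ↔ w = v ∨ G.Adj v w := by
  simp [cNbr]

lemma kmcn_adj {m n : ℕ} {u w : Fin m × ZMod n} :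
    (KmCn m n).Adj u w ↔ u.1 ≠ w.1 ∧ (u.2 + 1 = w.2 ∨ w.2 + 1 = u.2) := Iff.rfl

lemma sid_forall {V : Type*} {G : SimpleGraph V} {S : Set V} (hS : IsSID G S)
    {v : V} (w : V) (h : ∀ c ∈ cNbr G v ∩ S, w ∈ cNbr G c) : w = v := by
  have h2 := (hS.2 v).2
  have hw : w ∈ ⋂ c ∈ cNbr G v ∩ S, cNbr G c := Set.mem_iInter₂.mpr h
  rw [h2] at hw
  exact hw

lemma sid_sep {V : Type*} {G : SimpleGraph V} {S : Set V} (hS : IsSID G S)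
    {v u : V} (h : u ≠ v) : ∃ c ∈ cNbr G v ∩ S, u ∉ cNbr G c := by
  by_contra hc
  push_neg at hc
  exact h (sid_forall hS u hc)

lemma zmod_two_ne {n : ℕ} (hn : 3 ≤ n) : (2 : ZMod n) ≠ 0 := by
  intro h
  have h2 : ((2 : ℕ) : ZMod n) = 0 := by exact_mod_cast h
  rw [ZMod.natCast_eq_zero_iff] at h2
  have := Nat.le_of_dvd (by norm_num) h2
  omega

lemma zmod_one_ne {n : ℕ} (hn : 3 ≤ n) : (1 : ZMod n) ≠ 0 := by
  intro h
  have h2 : ((1 : ℕ) : ZMod n) = 0 := by exact_mod_cast h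
  rw [ZMod.natCast_eq_zero_iff] at h2
  have := Nat.le_of_dvd (by norm_num) h2
  omega

section facts

variable {m n : ℕ} {S : Set (Fin m × ZMod n)}

/-- If `(i,k) ∉ S`, there is a codeword in column `k+1` with row `≠ i`. -/
lemma G1plus (hn : 3 ≤ n) (hS : IsSID (KmCn m n) S) {i : Fin m} {k : ZMod n}
    (hv : (i, k) ∉ S) : ∃ t : Fin m, t ≠ i ∧ (t, k + 1) ∈ S := by
  by_contra hno
  push_neg at hno
  have key : ((i, k - 2) : Fin m × ZMod n) = (i, k) := by
    apply sid_forall hS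
    rintro ⟨t, l⟩ ⟨hcN, hcS⟩
    rcases mem_cNbr.mp hcN with heq | hadj
    · rw [heq] at hcS; exact absurd hcS hv
    · obtain ⟨hne, hcol⟩ := hadj
      rcases hcol with h | h
      · exfalso
        apply hno t (Ne.symm hne)
        rw [h]; exact hcS
      · refine mem_cNbr.mpr (Or.inr ⟨Ne.symm hne, Or.inr ?_⟩)
        show k - 2 + 1 = l
        linear_combination -h
  have hk : k - 2 = k := congrArg Prod.snd key
  exact zmod_two_ne hn (by linear_combination -hk)

/-- If `(i,k) ∉ S`, there is a codeword in column `k-1` with row `≠ i`. -/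
lemma G1minus (hn : 3 ≤ n) (hS : IsSID (KmCn m n) S) {i : Fin m} {k : ZMod n}
    (hv : (i, k) ∉ S) : ∃ t : Fin m, t ≠ i ∧ (t, k - 1) ∈ S := by
  by_contra hno
  push_neg at hno
  have key : ((i, k + 2) : Fin m × ZMod n) = (i, k) := by
    apply sid_forall hS
    rintro ⟨t, l⟩ ⟨hcN, hcS⟩
    rcases mem_cNbr.mp hcN with heq | hadj
    · rw [heq] at hcS; exact absurd hcS hv
    · obtain ⟨hne, hcol⟩ := hadj
      rcases hcol with h | h
      · refine mem_cNbr.mpr (Or.inr ⟨Ne.symm hne, Or.inl ?_⟩)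
        show l + 1 = k + 2
        linear_combination -h
      · exfalso
        apply hno t (Ne.symm hne)
        have hl : l = k - 1 := by linear_combination h
        rw [← hl]; exact hcS
  have hk : k + 2 = k := congrArg Prod.snd key
  exact zmod_two_ne hn (by linear_combination hk)

/-- Row coverage: if `(i,k) ∉ S` and `t ≠ i`, row `t` carries a codeword in
column `k-1` or `k+1`. -/
lemma G2 (hn : 3 ≤ n) (hS : IsSID (KmCn m n) S) {i t : Fin m} {k : ZMod n}
    (hv : (i, k) ∉ S) (ht : t ≠ i) : (t, k - 1) ∈ S ∨ (t, k + 1) ∈ S := by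
  obtain ⟨c, ⟨hcN, hcS⟩, hu⟩ := sid_sep hS
    (show ((t, k) : Fin m × ZMod n) ≠ (i, k) from fun h => ht (congrArg Prod.fst h))
  obtain ⟨s, l⟩ := c
  rcases mem_cNbr.mp hcN with heq | hadj
  · rw [heq] at hcS; exact absurd hcS hv
  · obtain ⟨hne, hcol⟩ := hadj
    have hst : s = t := by
      by_contra hst
      exact hu (mem_cNbr.mpr (Or.inr ⟨hst, hcol.symm⟩))
    subst hst
    rcases hcol with h | h
    · right; rw [h]; exact hcS
    · left
      have hl : l = k - 1 := by linear_combination h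
      rw [← hl]; exact hcS

/-- Every vertex has at least two distinct codewords among its (open) neighbors. -/
lemma G3 (hm : 3 ≤ m) (hn : 3 ≤ n) (hS : IsSID (KmCn m n) S) (v : Fin m × ZMod n) :
    ∃ c1 c2 : Fin m × ZMod n, c1 ≠ c2 ∧ (c1 ∈ S ∧ (KmCn m n).Adj v c1) ∧
      (c2 ∈ S ∧ (KmCn m n).Adj v c2) := by
  by_contra hcon
  push_neg at hcon
  by_cases hP : ∃ c, c ∈ S ∧ (KmCn m n).Adj v c
  · obtain ⟨c1, hc1⟩ := hP
    have huniq : ∀ c, c ∈ S → (KmCn m n).Adj v c → c = c1 := by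
      intro c hc hadj
      by_contra hne
      exact (hcon c c1 hne ⟨hc, hadj⟩ hc1.1) hc1.2
    have hcv : c1 = v := by
      apply sid_forall hS
      rintro c ⟨hcN, hcS⟩
      rcases mem_cNbr.mp hcN with rfl | hadj
      · exact mem_cNbr.mpr (Or.inr hc1.2)
      · rw [huniq c hcS hadj]; exact mem_cNbr.mpr (Or.inl rfl)
    exact (KmCn m n).loopless.irrefl v (hcv ▸ hc1.2)
  · push_neg at hP
    obtain ⟨i, k⟩ := v
    haveI : Nontrivial (Fin m) := Fin.nontrivial_iff_two_le.mpr (by omega)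
    obtain ⟨t, ht⟩ := exists_ne i
    have hw : ((t, k + 1) : Fin m × ZMod n) = (i, k) := by
      apply sid_forall hS
      rintro c ⟨hcN, hcS⟩
      rcases mem_cNbr.mp hcN with rfl | hadj
      · exact mem_cNbr.mpr (Or.inr ⟨fun hh => ht hh.symm, Or.inl rfl⟩)
      · exact absurd hadj (hP c hcS)
    have hk : k + 1 = k := congrArg Prod.snd hw
    exact zmod_one_ne hn (by linear_combination hk)

end facts

theorem stmt15 (m n : ℕ) (hm : 3 ≤ m) (hn : 3 ≤ n) (S : Set (Fin m × ZMod n))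
    (hS : IsSID (KmCn m n) S) (j : ZMod n) :
    m + 2 ≤ (({p : Fin m × ZMod n | p.2 = j - 1} ∪
        {p : Fin m × ZMod n | p.2 = j} ∪
        {p : Fin m × ZMod n | p.2 = j + 1}) ∩ S).ncard := by
  classical
  haveI : NeZero n := ⟨by omega⟩
  set A : Finset (Fin m) := Finset.univ.filter (fun i => (i, j - 1) ∈ S) with hA
  set B : Finset (Fin m) := Finset.univ.filter (fun i => (i, j) ∈ S) with hB
  set C : Finset (Fin m) := Finset.univ.filter (fun i => (i, j + 1) ∈ S) with hC
  have hAmem : ∀ t, t ∈ A ↔ (t, j - 1) ∈ S := by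
    intro t; simp [hA]
  have hBmem : ∀ t, t ∈ B ↔ (t, j) ∈ S := by
    intro t; simp [hB]
  have hCmem : ∀ t, t ∈ C ↔ (t, j + 1) ∈ S := by
    intro t; simp [hC]
  -- translated structural facts
  have hg2 : ∀ i, i ∉ B → ∀ t, t ≠ i → t ∈ A ∪ C := by
    intro i hi t ht
    have hv : (i, j) ∉ S := fun h => hi ((hBmem i).mpr h)
    rcases G2 hn hS hv ht with h | h
    · exact Finset.mem_union_left _ ((hAmem t).mpr h)
    · exact Finset.mem_union_right _ ((hCmem t).mpr h)
  have h1 : ∀ i, i ∉ A → ∃ t, t ≠ i ∧ t ∈ B := by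
    intro i hi
    have hv : (i, j - 1) ∉ S := fun h => hi ((hAmem i).mpr h)
    obtain ⟨t, ht, hts⟩ := G1plus hn hS hv
    refine ⟨t, ht, (hBmem t).mpr ?_⟩
    have : j - 1 + 1 = j := by ring
    rwa [this] at hts
  have h2 : ∀ i, i ∉ C → ∃ t, t ≠ i ∧ t ∈ B := by
    intro i hi
    have hv : (i, j + 1) ∉ S := fun h => hi ((hCmem i).mpr h)
    obtain ⟨t, ht, hts⟩ := G1minus hn hS hv
    refine ⟨t, ht, (hBmem t).mpr ?_⟩
    have : j + 1 - 1 = j := by ring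
    rwa [this] at hts
  have hA1 : ∀ i, i ∉ B → A.Nonempty := by
    intro i hi
    have hv : (i, j) ∉ S := fun h => hi ((hBmem i).mpr h)
    obtain ⟨t, _, hts⟩ := G1minus hn hS hv
    exact ⟨t, (hAmem t).mpr hts⟩
  have hC1 : ∀ i, i ∉ B → C.Nonempty := by
    intro i hi
    have hv : (i, j) ∉ S := fun h => hi ((hBmem i).mpr h)
    obtain ⟨t, _, hts⟩ := G1plus hn hS hv
    exact ⟨t, (hCmem t).mpr hts⟩
  have hg3 : ∀ i : Fin m, 2 ≤ (A.erase i).card + (C.erase i).card := by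
    intro i
    obtain ⟨c1, c2, hne, ⟨hc1S, hc1adj⟩, ⟨hc2S, hc2adj⟩⟩ := G3 hm hn hS (i, j)
    set D := ((A.erase i).image fun t => ((t, j - 1) : Fin m × ZMod n)) ∪
      ((C.erase i).image fun t => ((t, j + 1) : Fin m × ZMod n)) with hD
    have hmemD : ∀ cc : Fin m × ZMod n, cc ∈ S → (KmCn m n).Adj (i, j) cc → cc ∈ D := by
      rintro ⟨t, l⟩ hcS hadj
      obtain ⟨hne', hcol⟩ := hadj
      have hti : t ≠ i := fun hh => hne' hh.symm
      rcases hcol with h | h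
      · -- l = j + 1
        apply Finset.mem_union_right
        refine Finset.mem_image.mpr ⟨t, Finset.mem_erase.mpr ⟨hti, (hCmem t).mpr ?_⟩, ?_⟩
        · rw [h]; exact hcS
        · rw [h]
      · -- l = j - 1
        have hl : l = j - 1 := by linear_combination h
        subst hl
        apply Finset.mem_union_left
        exact Finset.mem_image.mpr ⟨t, Finset.mem_erase.mpr ⟨hti, (hAmem t).mpr hcS⟩, rfl⟩
    have h12 : ({c1, c2} : Finset (Fin m × ZMod n)) ⊆ D := by
      intro x hx
      rcases Finset.mem_insert.mp hx with rfl | hx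
      · exact hmemD x hc1S hc1adj
      · rw [Finset.mem_singleton.mp hx]
        exact hmemD c2 hc2S hc2adj
    have hcard12 : ({c1, c2} : Finset (Fin m × ZMod n)).card = 2 := by
      rw [Finset.card_insert_of_notMem (by simp [hne]), Finset.card_singleton]
    calc 2 = ({c1, c2} : Finset (Fin m × ZMod n)).card := hcard12.symm
      _ ≤ D.card := Finset.card_le_card h12
      _ ≤ ((A.erase i).image fun t => ((t, j - 1) : Fin m × ZMod n)).card +
          ((C.erase i).image fun t => ((t, j + 1) : Fin m × ZMod n)).card :=
        Finset.card_union_le _ _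
      _ ≤ (A.erase i).card + (C.erase i).card := by
        gcongr <;> exact Finset.card_image_le
  -- counting
  have hcardB : B.card ≤ m := by
    have := Finset.card_le_univ B
    simpa using this
  have key : m + 2 ≤ A.card + B.card + C.card := by
    by_cases hbm : B.card = m
    · have h3 := hg3 ⟨0, by omega⟩
      have e1 : ((A.erase ⟨0, by omega⟩).card : ℕ) ≤ A.card := Finset.card_erase_le
      have e2 : ((C.erase ⟨0, by omega⟩).card : ℕ) ≤ C.card := Finset.card_erase_le
      omega
    · have hsd : (Finset.univ \ B).card = m - B.card := by
        rw [Finset.card_sdiff_of_subset (Finset.subset_univ B)]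
        simp
      by_cases hbm1 : B.card = m - 1
      · have hnee : (Finset.univ \ B).Nonempty := Finset.card_pos.mp (by omega)
        obtain ⟨istar, histar⟩ := hnee
        have hiB : istar ∉ B := (Finset.mem_sdiff.mp histar).2
        have ha1 : 1 ≤ A.card := Finset.card_pos.mpr (hA1 istar hiB)
        have hc1 : 1 ≤ C.card := Finset.card_pos.mpr (hC1 istar hiB)
        by_cases haq : A.card = 1
        · obtain ⟨t1, ht1⟩ := Finset.card_eq_one.mp haq
          have h3 := hg3 t1
          have hz : (A.erase t1).card = 0 := by
            rw [ht1, Finset.erase_singleton, Finset.card_empty]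
          have hce : (C.erase t1).card ≤ C.card := Finset.card_erase_le
          omega
        · omega
      · -- B.card ≤ m - 2
        have hlt : 1 < (Finset.univ \ B).card := by omega
        have hcov : ∀ t, t ∈ A ∪ C := by
          intro t
          obtain ⟨i, hi, hnei⟩ := Finset.exists_mem_ne hlt t
          exact hg2 i (Finset.mem_sdiff.mp hi).2 t (Ne.symm hnei)
        have hmle : m ≤ (A ∪ C).card := by
          have hsub : (Finset.univ : Finset (Fin m)) ⊆ A ∪ C := fun t _ => hcov t
          calc m = (Finset.univ : Finset (Fin m)).card := by simp
            _ ≤ (A ∪ C).card := Finset.card_le_card hsub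
        have huni := Finset.card_union_add_card_inter A C
        by_cases hb0 : B.card = 0
        · have hBe : B = ∅ := Finset.card_eq_zero.mp hb0
          have hAu : m ≤ A.card := by
            have hall : ∀ i, i ∈ A := by
              intro i; by_contra hi
              obtain ⟨t, _, htB⟩ := h1 i hi
              rw [hBe] at htB
              exact absurd htB (Finset.notMem_empty t)
            have hsub : (Finset.univ : Finset (Fin m)) ⊆ A := fun t _ => hall t
            calc m = (Finset.univ : Finset (Fin m)).card := by simp
              _ ≤ A.card := Finset.card_le_card hsub
          have hCu : m ≤ C.card := by
            have hall : ∀ i, i ∈ C := by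
              intro i; by_contra hi
              obtain ⟨t, _, htB⟩ := h2 i hi
              rw [hBe] at htB
              exact absurd htB (Finset.notMem_empty t)
            have hsub : (Finset.univ : Finset (Fin m)) ⊆ C := fun t _ => hall t
            calc m = (Finset.univ : Finset (Fin m)).card := by simp
              _ ≤ C.card := Finset.card_le_card hsub
          omega
        · by_cases hb1 : B.card = 1
          · obtain ⟨i0, hi0⟩ := Finset.card_eq_one.mp hb1
            have hiA : i0 ∈ A := by
              by_contra hi
              obtain ⟨t, ht, htB⟩ := h1 i0 hi
              rw [hi0, Finset.mem_singleton] at htB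
              exact ht htB
            have hiC : i0 ∈ C := by
              by_contra hi
              obtain ⟨t, ht, htB⟩ := h2 i0 hi
              rw [hi0, Finset.mem_singleton] at htB
              exact ht htB
            have hint : 1 ≤ (A ∩ C).card :=
              Finset.card_pos.mpr ⟨i0, Finset.mem_inter.mpr ⟨hiA, hiC⟩⟩
            omega
          · omega
  -- assemble: relate to the ncard of the target set
  set F : Finset (Fin m × ZMod n) :=
    (A.image fun t => ((t, j - 1) : Fin m × ZMod n)) ∪
    (B.image fun t => ((t, j) : Fin m × ZMod n)) ∪
    (C.image fun t => ((t, j + 1) : Fin m × ZMod n)) with hF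
  have hinj : ∀ k0 : ZMod n, Function.Injective (fun t : Fin m => ((t, k0) : Fin m × ZMod n)) :=
    fun k0 a b h => congrArg Prod.fst h
  have hd1 : Disjoint (A.image fun t => ((t, j - 1) : Fin m × ZMod n))
      (B.image fun t => ((t, j) : Fin m × ZMod n)) := by
    rw [Finset.disjoint_left]
    rintro p hp1 hp2
    obtain ⟨x, _, rfl⟩ := Finset.mem_image.mp hp1
    obtain ⟨y, _, he⟩ := Finset.mem_image.mp hp2
    have hje : j = j - 1 := congrArg Prod.snd he
    exact zmod_one_ne hn (by linear_combination hje)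
  have hd2 : Disjoint ((A.image fun t => ((t, j - 1) : Fin m × ZMod n)) ∪
      (B.image fun t => ((t, j) : Fin m × ZMod n)))
      (C.image fun t => ((t, j + 1) : Fin m × ZMod n)) := by
    rw [Finset.disjoint_left]
    rintro p hp1 hp2
    obtain ⟨y, _, he⟩ := Finset.mem_image.mp hp2
    rcases Finset.mem_union.mp hp1 with hp1 | hp1
    · obtain ⟨x, _, rfl⟩ := Finset.mem_image.mp hp1
      have hje : j - 1 = j + 1 := congrArg Prod.snd he.symm
      exact zmod_two_ne hn (by linear_combination -hje)
    · obtain ⟨x, _, rfl⟩ := Finset.mem_image.mp hp1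
      have hje : j + 1 = j := congrArg Prod.snd he
      exact zmod_one_ne hn (by linear_combination hje)
  have hFcard : F.card = A.card + B.card + C.card := by
    rw [hF, Finset.card_union_of_disjoint hd2, Finset.card_union_of_disjoint hd1,
      Finset.card_image_of_injective _ (hinj (j - 1)),
      Finset.card_image_of_injective _ (hinj j),
      Finset.card_image_of_injective _ (hinj (j + 1))]
  rw [Set.ncard_eq_toFinset_card']
  have hsubF : F ⊆ (({p : Fin m × ZMod n | p.2 = j - 1} ∪
      {p : Fin m × ZMod n | p.2 = j} ∪
      {p : Fin m × ZMod n | p.2 = j + 1}) ∩ S).toFinset := by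
    intro p hp
    rw [Set.mem_toFinset]
    rcases Finset.mem_union.mp hp with hp' | hpC
    · rcases Finset.mem_union.mp hp' with hpA | hpB
      · obtain ⟨x, hx, rfl⟩ := Finset.mem_image.mp hpA
        exact ⟨Set.mem_union_left _ (Set.mem_union_left _ rfl), (hAmem x).mp hx⟩
      · obtain ⟨x, hx, rfl⟩ := Finset.mem_image.mp hpB
        exact ⟨Set.mem_union_left _ (Set.mem_union_right _ rfl), (hBmem x).mp hx⟩
    · obtain ⟨x, hx, rfl⟩ := Finset.mem_image.mp hpC
      exact ⟨Set.mem_union_right _ rfl, (hCmem x).mp hx⟩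
  calc m + 2 ≤ A.card + B.card + C.card := key
    _ = F.card := hFcard.symm
    _ ≤ _ := Finset.card_le_card hsubF
end
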